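/- For every integer t ≥ 2, the element (t·x_f, t) of the Leamer monoid S_Γ^s (where x_f is the first infinite column) has elasticity t/2; in particular, it has a factorization of length t into atoms and also a factorization of length 2 into atoms, and 2 is its minimum factorization length. -/
import Mathlib


/-- The Leamer monoid as a subset of ℕ × ℕ: (0,0) together with all (x,n), n ≥ 1,
such that x + i*s ∈ Γ for all 0 ≤ i ≤ n. -/
def Leamer (Γ : AddSubmonoid ℕ) (s : ℕ) : Set (ℕ × ℕ) :=
  {p | p = (0, 0) ∨ (1 ≤ p.2 ∧ ∀ i ≤ p.2, p.1 + i * s ∈ Γ)}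

/-- An irreducible (atom) of a subset S of ℕ × ℕ: a nonzero element of S that is not the
sum of two nonzero elements of S. -/
def LIrred (S : Set (ℕ × ℕ)) (z : ℕ × ℕ) : Prop :=
  z ∈ S ∧ z ≠ 0 ∧ ∀ a b : ℕ × ℕ, a ∈ S → b ∈ S → a ≠ 0 → b ≠ 0 → z ≠ a + b

/-- A reducible element of S: an element of S that is the sum of two nonzero elements of S. -/
def LReducible (S : Set (ℕ × ℕ)) (z : ℕ × ℕ) : Prop :=
  z ∈ S ∧ ∃ a b : ℕ × ℕ, a ∈ S ∧ b ∈ S ∧ a ≠ 0 ∧ b ≠ 0 ∧ z = a + b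

/-- The set of factorization lengths of z into irreducibles of S. -/
def LSet (S : Set (ℕ × ℕ)) (z : ℕ × ℕ) : Set ℕ :=
  {r | ∃ l : Multiset (ℕ × ℕ), Multiset.card l = r ∧ (∀ a ∈ l, LIrred S a) ∧ l.sum = z}

/-- The Delta set of z: differences of successive factorization lengths. -/
def LDelta (S : Set (ℕ × ℕ)) (z : ℕ × ℕ) : Set ℕ :=
  {d | ∃ a b, a ∈ LSet S z ∧ b ∈ LSet S z ∧ a < b ∧
    (∀ c, a < c → c < b → c ∉ LSet S z) ∧ d = b - a}

/-- The Delta set of the monoid S. -/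
def LDeltaMonoid (S : Set (ℕ × ℕ)) : Set ℕ :=
  {d | ∃ z, z ∈ S ∧ z ≠ 0 ∧ d ∈ LDelta S z}

/-- The Frobenius number of a numerical monoid Γ. -/
noncomputable def Frob (Γ : AddSubmonoid ℕ) : ℕ := sSup {x | x ∉ Γ}

/-- The numerical monoid generated by the arithmetic sequence m, m+s, ..., m+ks. -/
def ArithGamma (m k s : ℕ) : AddSubmonoid ℕ :=
  AddSubmonoid.closure {v | ∃ j ≤ k, v = m + j * s}


lemma lpos_snd {Γ : AddSubmonoid ℕ} {s : ℕ} {a : ℕ × ℕ} (ha : a ∈ Leamer Γ s) (h0 : a ≠ 0) :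
    1 ≤ a.2 := by
  rcases ha with h | h
  · exact absurd (by simpa [Prod.ext_iff] using h) h0
  · exact h.1

lemma latom1 {Γ : AddSubmonoid ℕ} {s : ℕ} {x : ℕ} (hx : (x, 1) ∈ Leamer Γ s) :
    LIrred (Leamer Γ s) (x, 1) := by
  refine ⟨hx, by simp [Prod.ext_iff], ?_⟩
  intro a b ha hb ha0 hb0 heq
  have h1 := lpos_snd ha ha0
  have h2 := lpos_snd hb hb0
  have : (1 : ℕ) = a.2 + b.2 := congrArg Prod.snd heq
  omega

lemma lcard_le_sum (l : Multiset (ℕ × ℕ)) (h : ∀ a ∈ l, 1 ≤ a.2) :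
    Multiset.card l ≤ l.sum.2 := by
  induction l using Multiset.induction with
  | empty => simp
  | cons a s ih =>
    simp only [Multiset.card_cons, Multiset.sum_cons, Prod.snd_add]
    have h1 := h a (Multiset.mem_cons_self a s)
    have h2 := ih (fun b hb => h b (Multiset.mem_cons_of_mem hb))
    omega

theorem stmt9 (Γ : AddSubmonoid ℕ) (hΓ : {x : ℕ | x ∉ Γ}.Finite) (s : ℕ) (hs : s ∉ Γ)
    (xf : ℕ) (hxf : IsLeast {x : ℕ | ∀ n : ℕ, 1 ≤ n → (x, n) ∈ Leamer Γ s} xf)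
    (t : ℕ) (ht : 2 ≤ t) (hatom : LIrred (Leamer Γ s) (xf, t - 1)) :
    t ∈ LSet (Leamer Γ s) (t * xf, t) ∧
    2 ∈ LSet (Leamer Γ s) (t * xf, t) ∧
    (∀ r ∈ LSet (Leamer Γ s) (t * xf, t), 2 ≤ r) ∧
    (∀ r ∈ LSet (Leamer Γ s) (t * xf, t), r ≤ t) := by
  have hmem1 : (xf, 1) ∈ Leamer Γ s := hxf.1 1 le_rfl
  have hxfΓ : xf ∈ Γ := by
    rcases hmem1 with h | h
    · -- then xf = 0, 0 ∈ Γ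
      have : xf = 0 := by simpa [Prod.ext_iff] using h
      simpa [this] using Γ.zero_mem
    · simpa using h.2 0 (Nat.zero_le 1)
  have hxfsΓ : xf + s ∈ Γ := by
    rcases hmem1 with h | h
    · exact absurd (congrArg Prod.snd h) (by simp)
    · simpa using h.2 1 le_rfl
  have hatom1 : LIrred (Leamer Γ s) (xf, 1) := latom1 hmem1
  -- membership of ((t-1)*xf, 1)
  have hmem2 : ((t - 1) * xf, 1) ∈ Leamer Γ s := by
    right
    refine ⟨le_rfl, ?_⟩
    intro i hi
    interval_cases i
    · simpa using AddSubmonoid.nsmul_mem Γ hxfΓ (t - 1)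
    · have heq : (t - 1) * xf + 1 * s = (t - 2) * xf + (xf + s) := by
        have h2 : t - 1 = (t - 2) + 1 := by omega
        rw [h2]; ring
      rw [heq]
      exact Γ.add_mem (AddSubmonoid.nsmul_mem Γ hxfΓ (t - 2)) hxfsΓ
  have hatom2 : LIrred (Leamer Γ s) ((t - 1) * xf, 1) := latom1 hmem2
  -- the length-2 decomposition sums correctly
  have hsum2 : (xf, t - 1) + ((t - 1) * xf, 1) = ((t : ℕ) * xf, t) := by
    have h1 : xf + (t - 1) * xf = t * xf := by
      obtain ⟨u, rfl⟩ := Nat.exists_eq_add_of_le ht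
      have h : 2 + u - 1 = 1 + u := by omega
      rw [h]; ring
    have h2 : t - 1 + 1 = t := by omega
    simp [Prod.ext_iff, h1, h2]
  refine ⟨?_, ?_, ?_, ?_⟩
  · -- length t
    refine ⟨Multiset.replicate t (xf, 1), by simp, ?_, ?_⟩
    · intro a ha
      rw [Multiset.eq_of_mem_replicate ha]
      exact hatom1
    · rw [Multiset.sum_replicate]
      simp [Prod.ext_iff, smul_eq_mul]
  · -- length 2
    refine ⟨{(xf, t - 1), ((t - 1) * xf, 1)}, by simp, ?_, ?_⟩
    · intro a ha
      rcases Multiset.mem_cons.mp ha with h | h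
      · rw [h]; exact hatom
      · rw [Multiset.mem_singleton.mp h]; exact hatom2
    · simpa using hsum2
  · -- min length 2
    rintro r ⟨l, hcard, hirr, hsum⟩
    by_contra hlt
    push_neg at hlt
    interval_cases r
    · have : l = 0 := Multiset.card_eq_zero.mp hcard
      rw [this] at hsum
      have := congrArg Prod.snd hsum
      simp at this
      omega
    · obtain ⟨a, hl⟩ := Multiset.card_eq_one.mp hcard
      rw [hl] at hsum hirr
      simp at hsum
      have hir := hirr a (Multiset.mem_singleton_self a)
      rw [hsum] at hir
      exact hir.2.2 (xf, t - 1) ((t - 1) * xf, 1) hatom.1 hatom2.1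
        (by simp [Prod.ext_iff]; omega) (by simp [Prod.ext_iff]) hsum2.symm
  · -- max length t
    rintro r ⟨l, hcard, hirr, hsum⟩
    have := lcard_le_sum l (fun a ha => lpos_snd (hirr a ha).1 (hirr a ha).2.1)
    rw [hsum, hcard] at this
    exact this
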